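/- For fixed α, β, γ ∈ ℕ ∪ {0}, the binary operation f(a,b) = αa + βb + γab on the positive naturals is associative if and only if α² = α, β² = β, and αγ = βγ. -/
import Mathlib


/-- `f (a, b) = α a + β b + γ a b` is associative on positive naturals iff
`α² = α`, `β² = β` and `α γ = β γ`. -/
theorem stmt_13 (α β γ : ℕ) (f : ℕ → ℕ → ℕ)
    (hf : ∀ a b : ℕ, f a b = α * a + β * b + γ * a * b) :
    (∀ a b c : ℕ, 0 < a → 0 < b → 0 < c → f (f a b) c = f a (f b c)) ↔
      (α ^ 2 = α ∧ β ^ 2 = β ∧ α * γ = β * γ) := by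
  constructor
  · intro h
    have h1 := h 1 1 1 one_pos one_pos one_pos
    have h2 := h 2 1 1 two_pos one_pos one_pos
    have h4 := h 2 1 2 two_pos one_pos two_pos
    simp only [hf] at h1 h2 h4
    have ha : α ≤ α ^ 2 := Nat.le_self_pow two_ne_zero α
    have hb : β ≤ β ^ 2 := Nat.le_self_pow two_ne_zero β
    ring_nf at h1 h2 h4
    refine ⟨by linarith, by linarith, by linarith⟩
  · rintro ⟨ha, hb, hab⟩ a b c _ _ _
    simp only [hf]
    zify at ha hb hab ⊢
    linear_combination (a : ℤ) * ha - (c : ℤ) * hb + (a : ℤ) * c * hab
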